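/- Let r, s ∈ ℕ, let Σ be a random homogeneous self-similar model over a finite alphabet I with contraction ratios λ_i and finitely supported translation distributions, and let Σ'' be the 'skip every s-th coordinate' model obtained by grouping coordinates into blocks of length s and deleting the last coordinate of each block, with uniform weights. Then the similarity dimension satisfies s-dim(Σ'') = (1 − 1/s) · s-dim(Σ), where s-dim(Σ) = (∫ ∑_j p_j^{(ω_1)} log p_j^{(ω_1)} dℙ(ω)) / (∫ log λ_{ω_1} dℙ(ω)) and the weights of Σ are uniform on k_i symbols for each i. -/

import Mathlib

lemma sdim_skip_key {I : Type*} [Fintype I] {s : ℕ} (q f : I → ℝ) (hq1 : ∑ i, q i = 1)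
    (l : Fin s) :
    ∑ v : Fin s → I, (∏ m, q (v m)) * f (v l) = ∑ i, q i * f i := by
  set g : Fin s → I → ℝ := fun m a => if m = l then q a * f a else q a with hg
  have h : ∀ v : Fin s → I, (∏ m, q (v m)) * f (v l) = ∏ m, g m (v m) := by
    intro v
    rw [← Finset.mul_prod_erase Finset.univ (fun m => g m (v m)) (Finset.mem_univ l),
        ← Finset.mul_prod_erase Finset.univ (fun m => q (v m)) (Finset.mem_univ l)]
    simp only [hg, if_pos rfl]
    rw [Finset.prod_congr rfl (fun m hm => if_neg (Finset.ne_of_mem_erase hm))]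
    ring
  simp only [h]
  have := (Finset.prod_univ_sum (fun _ : Fin s => (Finset.univ : Finset I)) g).symm
  rw [Fintype.piFinset_univ] at this
  rw [this, ← Finset.mul_prod_erase Finset.univ (fun m => ∑ i, g m i) (Finset.mem_univ l)]
  simp [hg, hq1]

lemma sdim_skip_sum {I : Type*} [Fintype I] {s : ℕ} (q f : I → ℝ) (hq1 : ∑ i, q i = 1)
    (T : Finset (Fin s)) :
    ∑ v : Fin s → I, (∏ m, q (v m)) * (∑ l ∈ T, f (v l))
      = (T.card : ℝ) * ∑ i, q i * f i := by
  have : ∀ v : Fin s → I, (∏ m, q (v m)) * (∑ l ∈ T, f (v l))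
      = ∑ l ∈ T, (∏ m, q (v m)) * f (v l) := fun v => Finset.mul_sum _ _ _
  simp only [this]
  rw [Finset.sum_comm]
  rw [Finset.sum_congr rfl (fun l _ => sdim_skip_key q f hq1 l)]
  rw [Finset.sum_const, nsmul_eq_mul]

/-- Similarity dimension of the "skip every s-th coordinate" model: with uniform weights
and Bernoulli selection measure with marginal `q`, the model `Σ''` on the alphabet `I^s`
(contracting by `∏_{l<s} λ_{î_l}` and having `∏_{l<s−1} k_{î_l}` maps with uniform weights)
satisfies `s-dim(Σ'') = (1 − 1/s) · s-dim(Σ)`. -/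
theorem sdim_skip_model {I : Type*} [Fintype I] (s : ℕ) (hs : 1 ≤ s)
    (q : I → ℝ) (hq0 : ∀ i, 0 ≤ q i) (hq1 : ∑ i, q i = 1)
    (lam : I → ℝ) (hlam : ∀ i, lam i ∈ Set.Ioo (0 : ℝ) 1)
    (k : I → ℕ) (hk : ∀ i, 1 ≤ k i) :
    (∑ v : Fin s → I, (∏ l, q (v l)) *
        Real.log (∏ l ∈ Finset.univ.filter (fun l : Fin s => (l : ℕ) < s - 1),
          (k (v l) : ℝ))) /
      (-(∑ v : Fin s → I, (∏ l, q (v l)) * Real.log (∏ l, lam (v l))))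
    = (1 - 1 / (s : ℝ)) *
        ((∑ i, q i * Real.log (k i)) / (-(∑ i, q i * Real.log (lam i)))) := by
  set T : Finset (Fin s) := Finset.univ.filter (fun l : Fin s => (l : ℕ) < s - 1) with hT
  have hTcard : T.card = s - 1 := by
    have h1 : s - 1 < s := by omega
    have : T = Finset.Iio (⟨s - 1, h1⟩ : Fin s) := by
      ext l; simp [hT, Finset.mem_Iio, Fin.lt_def]
    rw [this, Fin.card_Iio]
  have hnum : ∀ v : Fin s → I,
      Real.log (∏ l ∈ T, (k (v l) : ℝ)) = ∑ l ∈ T, Real.log (k (v l)) :=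
    fun v => Real.log_prod (fun l _ => by
      have := hk (v l); positivity)
  have hden : ∀ v : Fin s → I,
      Real.log (∏ l : Fin s, lam (v l)) = ∑ l : Fin s, Real.log (lam (v l)) :=
    fun v => Real.log_prod (fun l _ => (hlam (v l)).1.ne')
  simp only [hnum, hden]
  rw [sdim_skip_sum q (fun i => Real.log (k i)) hq1 T,
      sdim_skip_sum q (fun i => Real.log (lam i)) hq1 Finset.univ]
  rw [hTcard, Finset.card_univ, Fintype.card_fin]
  have hsne : (s : ℝ) ≠ 0 := by positivity
  have hcast : ((s - 1 : ℕ) : ℝ) = (s : ℝ) - 1 := by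
    rw [Nat.cast_sub hs, Nat.cast_one]
  rw [hcast]
  set A := ∑ i, q i * Real.log (k i)
  set B := ∑ i, q i * Real.log (lam i)
  have : -((s : ℝ) * B) = (s : ℝ) * (-B) := by ring
  rw [this, mul_div_mul_comm]
  congr 1
  field_simp
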